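/- arXiv:0707.2190 — 5 statements merged into one kernel-verified Lean document; each statement's English description precedes it below -/
import Mathlib

section
/- If n is a positive integer with σ(n) = σ(n+1) and σ(n) is odd, then either n is a perfect square and n + 1 is twice a perfect square, or n is twice a perfect square and n + 1 is a perfect square. -/
open ArithmeticFunction
open scoped ArithmeticFunction.sigma

lemma aux_sq_of_even_fact (n : ℕ) (hn : n ≠ 0) (h : ∀ p, Even (n.factorization p)) :
    ∃ k : ℕ, n = k ^ 2 := by
  refine ⟨n.factorization.prod fun p e => p ^ (e / 2), ?_⟩
  conv_lhs => rw [← Nat.factorization_prod_pow_eq_self hn]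
  rw [Finsupp.prod, Finsupp.prod, ← Finset.prod_pow]
  refine Finset.prod_congr rfl fun p hp => ?_
  rw [← pow_mul]
  congr 1
  exact (Nat.div_mul_cancel (h p).two_dvd).symm

lemma aux_even_fact_of_odd_sigma (n : ℕ) (hn : n ≠ 0) (hodd : Odd (σ 1 n)) :
    ∀ p, p ≠ 2 → Even (n.factorization p) := by
  intro p hp2
  by_cases hp : p.Prime
  · by_cases hmem : p ∈ n.factorization.support
    · have hfact := (isMultiplicative_sigma (k := 1)).multiplicative_factorization _ hn
      rw [hfact, Finsupp.prod] at hodd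
      have hdvd : σ 1 (p ^ n.factorization p) ∣
          ∏ q ∈ n.factorization.support, σ 1 (q ^ n.factorization q) :=
        Finset.dvd_prod_of_mem _ hmem
      have hodd' : Odd (σ 1 (p ^ n.factorization p)) := by
        rcases Nat.even_or_odd (σ 1 (p ^ n.factorization p)) with he | ho
        · exact absurd (even_iff_two_dvd.mpr (dvd_trans he.two_dvd hdvd))
            (Nat.not_even_iff_odd.mpr hodd)
        · exact ho
      set e := n.factorization p with he
      have hsum : σ 1 (p ^ e) = ∑ i ∈ Finset.range (e + 1), p ^ i := by
        rw [sigma_one_apply, Nat.sum_divisors_prime_pow hp]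
      rw [hsum] at hodd'
      have hpodd : Odd p := hp.odd_of_ne_two hp2
      have hmod : (∑ i ∈ Finset.range (e + 1), p ^ i) % 2 = (e + 1) % 2 := by
        rw [Finset.sum_nat_mod]
        have : ∀ i ∈ Finset.range (e + 1), p ^ i % 2 = 1 := fun i _ =>
          Nat.odd_iff.mp hpodd.pow
        rw [Finset.sum_congr rfl this]
        simp
      rw [Nat.odd_iff, hmod, ← Nat.odd_iff] at hodd'
      obtain ⟨c, hc⟩ := hodd'
      exact ⟨c, by omega⟩
    · rw [Finsupp.notMem_support_iff.mp hmem]; exact Even.zero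
  · rw [Nat.factorization_eq_zero_of_not_prime _ hp]; exact Even.zero

lemma aux_sq_or_two_sq (n : ℕ) (hn : n ≠ 0) (hodd : Odd (σ 1 n)) :
    (∃ k : ℕ, n = k ^ 2) ∨ (∃ k : ℕ, n = 2 * k ^ 2) := by
  have h := aux_even_fact_of_odd_sigma n hn hodd
  rcases Nat.even_or_odd (n.factorization 2) with ha | ha
  · left
    exact aux_sq_of_even_fact n hn fun p => by
      by_cases hp : p = 2
      · rwa [hp]
      · exact h p hp
  · right
    have h2 : 2 ∣ n := by
      have : 1 ≤ n.factorization 2 := ha.pos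
      exact Nat.dvd_of_factorization_pos (by omega)
    obtain ⟨m, hm⟩ := h2
    have hm0 : m ≠ 0 := by rintro rfl; simp at hm; exact hn hm
    have hfadd : n.factorization = (2 : ℕ).factorization + m.factorization := by
      rw [hm, Nat.factorization_mul two_ne_zero hm0]
    have h2f : (2 : ℕ).factorization = Finsupp.single 2 1 := Nat.Prime.factorization Nat.prime_two
    have hfm : ∀ p, Even (m.factorization p) := by
      intro p
      have hcalc : n.factorization p = (Finsupp.single 2 1 : ℕ →₀ ℕ) p + m.factorization p := by
        rw [hfadd, h2f]; rfl
      by_cases hp : p = 2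
      · subst hp
        simp [Finsupp.single_apply] at hcalc
        obtain ⟨c, hc⟩ := ha
        exact ⟨c, by omega⟩
      · have : (Finsupp.single 2 1 : ℕ →₀ ℕ) p = 0 := Finsupp.single_eq_of_ne hp
        rw [this, zero_add] at hcalc
        rw [← hcalc]; exact h p hp
    obtain ⟨k, hk⟩ := aux_sq_of_even_fact m hm0 hfm
    exact ⟨k, by rw [hm, hk]⟩

/-- If `σ 1 n = σ 1 (n+1)` is odd, then `n` is a square and `n+1` is twice a square,
or `n` is twice a square and `n+1` is a square. -/
theorem square_or_two_mul_square_of_sigma_eq_odd (n : ℕ) (hn : 0 < n)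
    (heq : σ 1 n = σ 1 (n + 1)) (hodd : Odd (σ 1 n)) :
    ((∃ k : ℤ, (n : ℤ) = k ^ 2) ∧ (∃ k : ℤ, (n : ℤ) + 1 = 2 * k ^ 2)) ∨
    ((∃ k : ℤ, (n : ℤ) = 2 * k ^ 2) ∧ (∃ k : ℤ, (n : ℤ) + 1 = k ^ 2)) := by
  have h1 := aux_sq_or_two_sq n hn.ne' hodd
  have h2 := aux_sq_or_two_sq (n + 1) (Nat.succ_ne_zero n) (heq ▸ hodd)
  rcases h1 with ⟨a, ha⟩ | ⟨a, ha⟩ <;> rcases h2 with ⟨b, hb⟩ | ⟨b, hb⟩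
  · -- n = a², n+1 = b² : impossible for n ≥ 1
    exfalso
    have ha1 : 1 ≤ a := by nlinarith
    have hab : a < b := by nlinarith
    nlinarith
  · left
    exact ⟨⟨(a : ℤ), by exact_mod_cast ha⟩, ⟨(b : ℤ), by exact_mod_cast hb⟩⟩
  · right
    exact ⟨⟨(a : ℤ), by exact_mod_cast ha⟩, ⟨(b : ℤ), by exact_mod_cast hb⟩⟩
  · -- n = 2a², n+1 = 2b² : parity contradiction
    exfalso
    have h2a := sq_nonneg a
    omega
end

section
/- For every positive integer n satisfying σ(n) = σ(n+1), the value σ(n) is divisible by 2 or divisible by 3. -/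
open ArithmeticFunction Finset
open scoped ArithmeticFunction.sigma

private lemma sigma_one_eq_prod (m : ℕ) (hm : m ≠ 0) :
    σ 1 m = ∏ p ∈ m.primeFactors, ∑ k ∈ Finset.range (m.factorization p + 1), p ^ k := by
  rw [sigma_one_apply]; exact Nat.sum_divisors hm

private lemma even_factorization_of_odd_sigma (m : ℕ) (hm : m ≠ 0)
    (h2 : ¬ 2 ∣ σ 1 m) (p : ℕ) (hp : p ≠ 2) : 2 ∣ m.factorization p := by
  by_cases hmem : p ∈ m.primeFactors
  · have hpp : p.Prime := Nat.prime_of_mem_primeFactors hmem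
    have hpodd : Odd p := hpp.odd_of_ne_two hp
    set e := m.factorization p with he
    -- the factor ∑ k in range (e+1), p^k divides σ 1 m
    have hdvd : (∑ k ∈ Finset.range (e + 1), p ^ k) ∣ σ 1 m := by
      rw [sigma_one_eq_prod m hm]
      exact Finset.dvd_prod_of_mem _ hmem
    have hoddsum : ¬ 2 ∣ ∑ k ∈ Finset.range (e + 1), p ^ k :=
      fun h => h2 (h.trans hdvd)
    -- sum of e+1 odd numbers has parity e+1
    have hmod : (∑ k ∈ Finset.range (e + 1), p ^ k) % 2 = (e + 1) % 2 := by
      rw [Finset.sum_nat_mod]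
      have : ∀ k ∈ Finset.range (e + 1), p ^ k % 2 = 1 := by
        intro k _
        exact Nat.odd_iff.mp (hpodd.pow)
      rw [Finset.sum_congr rfl this, Finset.sum_const, Finset.card_range, smul_eq_mul,
        mul_one]
    rcases Nat.even_or_odd e with he' | he'
    · exact he'.two_dvd
    · exfalso
      apply hoddsum
      rw [Nat.dvd_iff_mod_eq_zero, hmod, Nat.succ_mod_two_eq_zero_iff]
      exact Nat.odd_iff.mp he'
  · have : m.factorization p = 0 :=
      Finsupp.notMem_support_iff.mp (by rwa [Nat.support_factorization])
    simp [this]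

private lemma isSquare_of_even_factorization (m : ℕ) (hm : m ≠ 0)
    (h : ∀ p, 2 ∣ m.factorization p) : IsSquare m := by
  refine ⟨∏ p ∈ m.primeFactors, p ^ (m.factorization p / 2), ?_⟩
  rw [← Finset.prod_mul_distrib]
  conv_lhs => rw [← Nat.factorization_prod_pow_eq_self hm]
  rw [Nat.prod_factorization_eq_prod_primeFactors]
  refine Finset.prod_congr rfl fun p _ => ?_
  rw [← pow_add, ← Nat.two_mul, Nat.mul_div_cancel' (h p)]

private lemma three_dvd_geom_aux : ∀ b : ℕ, 3 ∣ ∑ k ∈ Finset.range (2 * b + 2), 2 ^ k := by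
  intro b
  induction b with
  | zero => decide
  | succ c ih =>
    have h : 2 * (c + 1) + 2 = (2 * c + 2) + 1 + 1 := by ring
    rw [h, Finset.sum_range_succ, Finset.sum_range_succ]
    obtain ⟨d, hd⟩ := ih
    refine ⟨d + 2 ^ (2 * c + 2), ?_⟩
    rw [hd]
    have : (2:ℕ) ^ (2 * c + 2 + 1) = 2 * 2 ^ (2 * c + 2) := by ring
    rw [this]; ring

private lemma three_dvd_geom (a : ℕ) (ha : ¬ 2 ∣ a) :
    3 ∣ ∑ k ∈ Finset.range (a + 1), 2 ^ k := by
  obtain ⟨b, hb⟩ : ∃ b, a = 2 * b + 1 := ⟨a / 2, by omega⟩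
  subst hb
  have : 2 * b + 1 + 1 = 2 * b + 2 := by ring
  rw [this]
  exact three_dvd_geom_aux b

private lemma three_dvd_sigma_of_odd_two_factorization (m : ℕ) (hm : m ≠ 0)
    (h : ¬ 2 ∣ m.factorization 2) : 3 ∣ σ 1 m := by
  set a := m.factorization 2 with ha
  have h2 : Nat.Prime 2 := Nat.prime_two
  have hsplit : m = 2 ^ a * (m / 2 ^ a) := (Nat.ordProj_mul_ordCompl_eq_self m 2).symm
  have hcop : Nat.Coprime (2 ^ a) (m / 2 ^ a) :=
    Nat.Coprime.pow_left a (Nat.coprime_ordCompl h2 hm)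
  have : σ 1 m = σ 1 (2 ^ a) * σ 1 (m / 2 ^ a) := by
    conv_lhs => rw [hsplit]
    exact isMultiplicative_sigma.map_mul_of_coprime hcop
  rw [this, sigma_one_apply_prime_pow h2]
  exact Dvd.dvd.mul_right (three_dvd_geom a h) _

/-- For every solution of the Erdős–Sierpiński problem, `σ 1 n` is divisible by 2 or 3. -/
theorem two_or_three_dvd_sigma_of_sigma_eq (n : ℕ) (hn : 0 < n)
    (heq : σ 1 n = σ 1 (n + 1)) :
    2 ∣ σ 1 n ∨ 3 ∣ σ 1 n := by
  by_cases h2 : 2 ∣ σ 1 n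
  · exact Or.inl h2
  right
  have hn0 : n ≠ 0 := hn.ne'
  have hn1 : n + 1 ≠ 0 := Nat.succ_ne_zero n
  have h2' : ¬ 2 ∣ σ 1 (n + 1) := heq ▸ h2
  -- the odd one among n, n+1 is a square; the even one has all odd-prime exponents even
  -- if the even one has odd 2-exponent, 3 ∣ σ; otherwise both are squares, contradiction
  have key : ∀ m : ℕ, m ≠ 0 → ¬ 2 ∣ σ 1 m → 2 ∣ m.factorization 2 → IsSquare m := by
    intro m hm hs h2e
    apply isSquare_of_even_factorization m hm
    intro p
    by_cases hp : p = 2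
    · rw [hp]; exact h2e
    · exact even_factorization_of_odd_sigma m hm hs p hp
  rcases Nat.even_or_odd n with hne | hno
  · -- n even, n+1 odd
    by_cases ha : 2 ∣ n.factorization 2
    · exfalso
      have hs1 : IsSquare n := key n hn0 h2 ha
      have hs2 : IsSquare (n + 1) := by
        apply key (n + 1) hn1 h2'
        have hd : 2 ∣ n := hne.two_dvd
        have : ¬ 2 ∣ (n + 1) := by omega
        rw [Nat.factorization_eq_zero_of_not_dvd this]
        exact dvd_zero 2
      obtain ⟨r, hr⟩ := hs1
      obtain ⟨s, hs⟩ := hs2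
      have hr1 : 1 ≤ r := by
        rcases Nat.eq_zero_or_pos r with h | h
        · simp [h] at hr; omega
        · exact h
      have : s * s = r * r + 1 := by omega
      have hrs : r < s := by nlinarith
      nlinarith
    · exact three_dvd_sigma_of_odd_two_factorization n hn0 ha
  · -- n odd, n+1 even
    by_cases ha : 2 ∣ (n + 1).factorization 2
    · exfalso
      have hs2 : IsSquare (n + 1) := key (n + 1) hn1 h2' ha
      have hs1 : IsSquare n := by
        apply key n hn0 h2
        have hh : n % 2 = 1 := Nat.odd_iff.mp hno
        have : ¬ 2 ∣ n := by omega
        rw [Nat.factorization_eq_zero_of_not_dvd this]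
        exact dvd_zero 2
      obtain ⟨r, hr⟩ := hs1
      obtain ⟨s, hs⟩ := hs2
      have hr1 : 1 ≤ r := by
        rcases Nat.eq_zero_or_pos r with h | h
        · simp [h] at hr; omega
        · exact h
      have : s * s = r * r + 1 := by omega
      have hrs : r < s := by nlinarith
      nlinarith
    · rw [heq]
      exact three_dvd_sigma_of_odd_two_factorization (n + 1) hn1 ha
end

section
/- Let n be a positive integer such that σ(n) = σ(n+1) and σ(n) is odd. Then either there exist integers x, y with n = 2·y^2, n + 1 = x^2 and x^2 − 2·y^2 = 1, or there exist integers x, y with n = x^2, n + 1 = 2·y^2 and x^2 − 2·y^2 = −1. -/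
open ArithmeticFunction
open scoped ArithmeticFunction.sigma

lemma sq_of_even_factorization (b : ℕ) (hb : b ≠ 0)
    (h : ∀ p, Even (b.factorization p)) : ∃ k, b = k ^ 2 := by
  refine ⟨b.factorization.prod fun p k => p ^ (k / 2), ?_⟩
  conv_lhs => rw [← Nat.factorization_prod_pow_eq_self hb]
  rw [Finsupp.prod, Finsupp.prod, ← Finset.prod_pow]
  refine Finset.prod_congr rfl fun p _ => ?_
  rw [← pow_mul]
  congr 1
  obtain ⟨c, hc⟩ := h p
  omega

lemma sq_of_odd_sigma_odd (b : ℕ) (hb : b ≠ 0) (hbo : Odd b) (h : Odd (σ 1 b)) :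
    ∃ k, b = k ^ 2 := by
  -- σ 1 b ≡ #divisors mod 2
  have hcard : Odd b.divisors.card := by
    have h1 : σ 1 b % 2 = b.divisors.card % 2 := by
      rw [sigma_one_apply, Finset.sum_nat_mod]
      have : ∀ d ∈ b.divisors, d % 2 = 1 := by
        intro d hd
        rcases Nat.mem_divisors.mp hd with ⟨hdvd, -⟩
        have := Nat.odd_iff.mp (hbo.of_dvd_nat hdvd)
        omega
      rw [Finset.sum_congr rfl this]
      simp [Finset.sum_const, Nat.mul_mod_right]
    rw [Nat.odd_iff] at h ⊢
    omega
  apply sq_of_even_factorization b hb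
  intro p
  by_cases hp : p ∈ b.primeFactors
  · have hc := Nat.card_divisors hb
    have hdvd : (b.factorization p + 1) ∣ b.divisors.card := by
      rw [hc]; exact Finset.dvd_prod_of_mem _ hp
    have : Odd (b.factorization p + 1) := hcard.of_dvd_nat hdvd
    rw [Nat.odd_iff] at this
    rw [Nat.even_iff]; omega
  · rw [← Nat.support_factorization] at hp
    rw [Finsupp.notMem_support_iff.mp hp]
    exact Even.zero

lemma key (m : ℕ) (hm : m ≠ 0) (h : Odd (σ 1 m)) :
    (∃ k : ℕ, m = k ^ 2) ∨ (∃ k : ℕ, m = 2 * k ^ 2) := by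
  set a := m.factorization 2 with ha
  set b := (m / 2 ^ a) with hb
  have hmb : 2 ^ a * b = m := Nat.ordProj_mul_ordCompl_eq_self m 2
  have hb0 : b ≠ 0 := (Nat.ordCompl_pos 2 hm).ne'
  have h2 : ¬ 2 ∣ b := Nat.not_dvd_ordCompl Nat.prime_two hm
  have hbo : Odd b := Nat.odd_iff.mpr (by omega)
  have hcop : Nat.Coprime (2 ^ a) b :=
    Nat.Coprime.pow_left _ (Nat.coprime_ordCompl Nat.prime_two hm)
  have hσ : σ 1 m = σ 1 (2 ^ a) * σ 1 b := by
    rw [← hmb]; exact isMultiplicative_sigma.map_mul_of_coprime hcop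
  have hσb : Odd (σ 1 b) := by
    rw [hσ] at h
    exact (Nat.Odd.of_mul_right h)
  obtain ⟨k, hk⟩ := sq_of_odd_sigma_odd b hb0 hbo hσb
  rcases Nat.even_or_odd a with he | ho
  · obtain ⟨c, hc⟩ := he
    left
    exact ⟨2 ^ c * k, by rw [← hmb, hk, hc]; ring⟩
  · obtain ⟨c, hc⟩ := ho
    right
    exact ⟨2 ^ c * k, by rw [← hmb, hk, hc]; ring⟩

/-- If `σ 1 n = σ 1 (n+1)` is odd, then `(x, y)` solving one of the two Pell
equations `x² − 2y² = ±1` gives `n` and `n+1`. -/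
theorem pell_of_sigma_eq_odd (n : ℕ) (hn : 0 < n)
    (heq : σ 1 n = σ 1 (n + 1)) (hodd : Odd (σ 1 n)) :
    (∃ x y : ℤ, (n : ℤ) = 2 * y ^ 2 ∧ (n : ℤ) + 1 = x ^ 2 ∧ x ^ 2 - 2 * y ^ 2 = 1) ∨
    (∃ x y : ℤ, (n : ℤ) = x ^ 2 ∧ (n : ℤ) + 1 = 2 * y ^ 2 ∧ x ^ 2 - 2 * y ^ 2 = -1) := by
  have h1 := key n hn.ne' hodd
  have h2 := key (n + 1) (by omega) (heq ▸ hodd)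
  have noconsec : ∀ k j : ℕ, n = k ^ 2 → n + 1 = j ^ 2 → False := by
    intro k j hk hj
    have hk1 : 1 ≤ k := by nlinarith
    have hjk : k < j := by nlinarith
    have : k + 1 ≤ j := hjk
    nlinarith
  rcases h1 with ⟨k, hk⟩ | ⟨k, hk⟩ <;> rcases h2 with ⟨j, hj⟩ | ⟨j, hj⟩
  · exact absurd hj (fun hj => noconsec k j hk hj)
  · right
    refine ⟨(k : ℤ), (j : ℤ), by exact_mod_cast hk, by exact_mod_cast hj, ?_⟩
    have hk' : (n : ℤ) = (k : ℤ) ^ 2 := by exact_mod_cast hk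
    have hj' : ((n : ℤ) + 1) = 2 * (j : ℤ) ^ 2 := by exact_mod_cast hj
    linarith
  · left
    refine ⟨(j : ℤ), (k : ℤ), by exact_mod_cast hk, by exact_mod_cast hj, ?_⟩
    have hk' : (n : ℤ) = 2 * (k : ℤ) ^ 2 := by exact_mod_cast hk
    have hj' : ((n : ℤ) + 1) = (j : ℤ) ^ 2 := by exact_mod_cast hj
    linarith
  · exfalso
    have := hk; have := hj
    set K := k ^ 2; set J := j ^ 2
    omega
end

section
/- Let m be a positive integer and set q = 3^(m+1) − 4 and p = (3^m · q − 1)/2. If q and p are both prime numbers, then n = 2·p is a solution of the Erdős–Sierpiński problem with n + 1 = 3^m · q; that is, σ(2·p) = σ(3^m · q) and 2·p + 1 = 3^m · q. -/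
open ArithmeticFunction
open scoped ArithmeticFunction.sigma

lemma sigma_one_prime' {p : ℕ} (hp : p.Prime) : σ 1 p = p + 1 := by
  rw [sigma_one_apply, hp.divisors, Finset.sum_insert (by simpa using Ne.symm hp.ne_one), Finset.sum_singleton]
  omega

lemma two_mul_sigma_three_pow (m : ℕ) : 2 * σ 1 (3 ^ m) + 1 = 3 ^ (m + 1) := by
  rw [sigma_one_apply_prime_pow (by norm_num)]
  induction m with
  | zero => simp
  | succ n ih =>
    rw [Finset.sum_range_succ, pow_succ]
    omega

/-- Guy–Shanks form (1): if `q = 3^(m+1) - 4` and `p = (3^m * q - 1) / 2` are both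
prime, then `n = 2 * p` is a solution of the Erdős–Sierpiński problem with
`n + 1 = 3^m * q`. -/
theorem guy_shanks_form_one (m q p : ℕ) (hm : 0 < m)
    (hq : q = 3 ^ (m + 1) - 4) (hp : p = (3 ^ m * q - 1) / 2)
    (hqp : q.Prime) (hpp : p.Prime) :
    σ 1 (2 * p) = σ 1 (3 ^ m * q) ∧ 2 * p + 1 = 3 ^ m * q := by
  have h3 : 3 ≤ 3 ^ m := by
    calc 3 = 3 ^ 1 := by norm_num
    _ ≤ 3 ^ m := Nat.pow_le_pow_right (by norm_num) hm
  have hx : 3 * 3 ^ m = q + 4 := by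
    have h9 : 9 ≤ 3 ^ (m + 1) := by rw [pow_succ]; omega
    rw [pow_succ] at hq h9
    omega
  have htodd : 3 ^ m % 2 = 1 := Nat.pow_mod 3 m 2 ▸ by simp
  have hqodd : q % 2 = 1 := by omega
  have htq_odd : (3 ^ m * q) % 2 = 1 := by rw [Nat.mul_mod, htodd, hqodd]
  have h2p : 2 * p + 1 = 3 ^ m * q := by
    have h1 : 0 < 3 ^ m * q := Nat.mul_pos (by positivity) hqp.pos
    rw [hp]; omega
  refine ⟨?_, h2p⟩
  have hq5 : 5 ≤ q := by omega
  have htq15 : 15 ≤ 3 ^ m * q := Nat.mul_le_mul h3 hq5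
  have hpne2 : p ≠ 2 := by omega
  have hc2p : Nat.Coprime 2 p := (Nat.coprime_primes Nat.prime_two hpp).2 (fun h => hpne2 h.symm)
  have hc3q : Nat.Coprime (3 ^ m) q :=
    Nat.Coprime.pow_left m ((Nat.coprime_primes Nat.prime_three hqp).2 (by omega))
  rw [isMultiplicative_sigma.map_mul_of_coprime hc2p,
    isMultiplicative_sigma.map_mul_of_coprime hc3q,
    sigma_one_prime' hpp, sigma_one_prime' hqp]
  have hσ2 : σ 1 2 = 3 := sigma_one_prime' Nat.prime_two
  rw [hσ2]
  have hS := two_mul_sigma_three_pow m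
  rw [pow_succ] at hS
  set S := σ 1 (3 ^ m) with hSdef
  have h2S : 2 * S = q + 3 := by omega
  apply Nat.eq_of_mul_eq_mul_left (show 0 < 2 by norm_num)
  calc 2 * (3 * (p + 1)) = 3 * (2 * p + 1) + 3 := by ring
    _ = 3 * (3 ^ m * q) + 3 := by rw [h2p]
    _ = (3 * 3 ^ m) * q + 3 := by ring
    _ = (q + 4) * q + 3 := by rw [hx]
    _ = (q + 3) * (q + 1) := by ring
    _ = (2 * S) * (q + 1) := by rw [h2S]
    _ = 2 * (S * (q + 1)) := by ring
end

section
/- Let m be an integer with m ≥ 2 and set q = 3^(m+1) − 10 and p = (3^m · q + 1)/2. If q and p are both prime numbers, then n = 3^m · q is a solution of the Erdős–Sierpiński problem with n + 1 = 2·p; that is, σ(3^m · q) = σ(2·p) and 3^m · q + 1 = 2·p. -/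
open ArithmeticFunction
open scoped ArithmeticFunction.sigma

lemma geom3 (n : ℕ) : 2 * (∑ k ∈ Finset.range n, 3 ^ k) + 1 = 3 ^ n := by
  induction n with
  | zero => simp
  | succ n ih =>
    rw [Finset.sum_range_succ, pow_succ]
    ring_nf
    ring_nf at ih
    omega

/-- Guy–Shanks form (2): if `q = 3^(m+1) - 10` and `p = (3^m * q + 1) / 2` are both
prime, then `n = 3^m * q` is a solution of the Erdős–Sierpiński problem with
`n + 1 = 2 * p`. -/
theorem guy_shanks_form_two (m q p : ℕ) (hm : 2 ≤ m)
    (hq : q = 3 ^ (m + 1) - 10) (hp : p = (3 ^ m * q + 1) / 2)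
    (hqp : q.Prime) (hpp : p.Prime) :
    σ 1 (3 ^ m * q) = σ 1 (2 * p) ∧ 3 ^ m * q + 1 = 2 * p := by
  have h27 : (27 : ℕ) ≤ 3 ^ (m + 1) := by
    calc (27 : ℕ) = 3 ^ 3 := by norm_num
    _ ≤ 3 ^ (m + 1) := Nat.pow_le_pow_right (by norm_num) (by omega)
  have h1 : q + 10 = 3 ^ (m + 1) := by omega
  have h3d : 3 ∣ 3 ^ (m + 1) := dvd_pow_self 3 (by omega)
  have hq3 : q ≠ 3 := by omega
  have hcop3 : Nat.Coprime 3 q :=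
    (Nat.coprime_primes Nat.prime_three hqp).mpr (by omega)
  have hcop : Nat.Coprime (3 ^ m) q := Nat.Coprime.pow_left _ hcop3
  have hqodd : Odd q := by
    have : Odd (3 ^ (m + 1)) := Odd.pow (by decide)
    rw [← h1] at this
    rcases this with ⟨k, hk⟩
    exact ⟨k - 5, by omega⟩
  have hnodd : Odd (3 ^ m * q) := (Odd.pow (by decide : Odd 3)).mul hqodd
  obtain ⟨k, hk⟩ := hnodd
  have h2p : 2 * p = 3 ^ m * q + 1 := by
    rw [hp, hk]
    omega
  refine ⟨?_, h2p.symm⟩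
  have hpodd : Odd p := by
    have h9 : 9 ≤ 3 ^ m := by
      calc (9 : ℕ) = 3 ^ 2 := by norm_num
      _ ≤ 3 ^ m := Nat.pow_le_pow_right (by norm_num) hm
    have hq2 : 2 ≤ q := hqp.two_le
    have : p ≠ 2 := by
      intro h; rw [h] at h2p
      nlinarith
    exact hpp.odd_of_ne_two this
  have hcop2p : Nat.Coprime 2 p :=
    (Nat.coprime_primes Nat.prime_two hpp).mpr (by rintro rfl; exact (Nat.not_odd_iff_even.mpr (by norm_num)) hpodd)
  have hσmul := (isMultiplicative_sigma (k := 1)).map_mul_of_coprime hcop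
  have hσmul2 := (isMultiplicative_sigma (k := 1)).map_mul_of_coprime hcop2p
  have hσq : σ 1 q = q + 1 := by
    have := sigma_one_apply_prime_pow (p := q) (i := 1) hqp
    simpa [Finset.sum_range_succ, add_comm] using this
  have hσp : σ 1 p = p + 1 := by
    have := sigma_one_apply_prime_pow (p := p) (i := 1) hpp
    simpa [Finset.sum_range_succ, add_comm] using this
  have hσ2 : σ 1 2 = 3 := by decide
  have hσ3m : σ 1 (3 ^ m) = ∑ k ∈ Finset.range (m + 1), 3 ^ k :=
    sigma_one_apply_prime_pow Nat.prime_three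
  set S := ∑ k ∈ Finset.range (m + 1), 3 ^ k with hS
  have hS2 : 2 * S = q + 9 := by
    have := geom3 (m + 1)
    omega
  rw [hσmul, hσmul2, hσq, hσp, hσ2, hσ3m]
  have key : 2 * (S * (q + 1)) = 2 * (3 * (p + 1)) := by
    calc 2 * (S * (q + 1)) = (2 * S) * (q + 1) := by ring
    _ = (q + 9) * (q + 1) := by rw [hS2]
    _ = (q + 10) * q + 9 := by ring
    _ = 3 ^ (m + 1) * q + 9 := by rw [h1]
    _ = 3 * (3 ^ m * q + 1) + 6 := by rw [pow_succ]; ring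
    _ = 3 * (2 * p) + 6 := by rw [h2p]
    _ = 2 * (3 * (p + 1)) := by ring
  exact Nat.eq_of_mul_eq_mul_left (by norm_num) key
end
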